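/- arXiv:1711.03436 — 2 statements merged into one kernel-verified Lean document; each statement's English description precedes it below -/
import Mathlib

section
/- Soundness of monitoring only allocations and function-call returns: in an operational semantics with statements allocation, assignment, load, store, and library call, if every allocation and every library-call return is monitored (so all abstract-object mappings ō↝o and all edges x↪ō at call statements are reported), then for every dynamic points-to edge x↪o occurring in an execution trace, either x↪o is reported, or x↪o is derivable by the static rules (assignment, load/store) from reported edges and allocation edges. -/
/-- Events (statement steps): allocation, assignment, load, store, and library
call (which assigns the returned concrete object `c` to `x`). -/
inductive Ev (V F M O CO : Type) where
  | alloc (x : V) (o : O) (c : CO)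
  | assign (x y : V)
  | load (x y : V) (f : F)
  | store (x : V) (f : F) (y : V)
  | call (x : V) (m : M) (y : V) (c : CO)

/-- A state: environment and heap. -/
structure St (V F CO : Type) where
  env : V → Option CO
  heap : CO → F → Option CO

/-- Small-step semantics of a single statement. Since only program code is
modeled (library effects appear only as call-return events), all heap writes use
program fields: the disjoint fields assumption is built in. -/
def step {V F M O CO : Type} [DecidableEq V] [DecidableEq F] [DecidableEq CO]
    (σ : St V F CO) : Ev V F M O CO → St V F CO
  | .alloc x _ c => ⟨Function.update σ.env x (some c), σ.heap⟩
  | .assign x y => ⟨Function.update σ.env x (σ.env y), σ.heap⟩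
  | .load x y f => ⟨Function.update σ.env x (σ.env y >>= fun c => σ.heap c f), σ.heap⟩
  | .store x f y =>
      ⟨σ.env, fun c g => if σ.env x = some c ∧ g = f then σ.env y else σ.heap c g⟩
  | .call x _ _ c => ⟨Function.update σ.env x (some c), σ.heap⟩

def runs {V F M O CO : Type} [DecidableEq V] [DecidableEq F] [DecidableEq CO]
    (σ0 : St V F CO) (tr : List (Ev V F M O CO)) : St V F CO :=
  tr.foldl step σ0

/-- The state reached after the first `i` steps of the trace. -/
def stateAt {V F M O CO : Type} [DecidableEq V] [DecidableEq F] [DecidableEq CO]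
    (σ0 : St V F CO) (tr : List (Ev V F M O CO)) (i : ℕ) : St V F CO :=
  runs σ0 (tr.take i)

/-- Static derivation from reported edges: monitored allocations give allocation
edges and the abstract object mapping; monitored library-call returns give
reported edges (rule `report`); the assignment and load/store rules are the
static points-to rules over the statements occurring in the trace. -/
inductive Derives {V F M O CO : Type} (tr : List (Ev V F M O CO)) : V → O → Prop where
  | alloc {x o c} : Ev.alloc x o c ∈ tr → Derives tr x o
  | assign {x y o} : Ev.assign x y ∈ tr → Derives tr y o → Derives tr x o
  | loadstore {x y z w : V} {f : F} {o o' : O} :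
      Ev.load x y f ∈ tr → Ev.store z f w ∈ tr →
      Derives tr y o' → Derives tr z o' → Derives tr w o → Derives tr x o
  | report {x : V} {m : M} {y x' : V} {o : O} {c : CO} :
      Ev.call x m y c ∈ tr → Ev.alloc x' o c ∈ tr → Derives tr x o

/-- Soundness of monitoring only allocations and call returns:
starting from the empty state, if concrete objects are allocated freshly and at a
unique allocation statement, and every object occurring in the environment is
allocated in available code (no allocations in library code), then every dynamic
points-to edge `x ↪ o` occurring in the trace is either reported or derivable by
the static rules from reported edges and allocation edges, i.e. `Derives tr x o`. -/
theorem stmt7 {V F M O CO : Type} [DecidableEq V] [DecidableEq F] [DecidableEq CO]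
    (σ0 : St V F CO)
    (hEnv : ∀ v, σ0.env v = none) (hHeap : ∀ c f, σ0.heap c f = none)
    (tr : List (Ev V F M O CO))
    (hFresh : ∀ i x o c, tr[i]? = some (.alloc x o c) →
      (∀ v, (stateAt σ0 tr i).env v ≠ some c) ∧
      (∀ c' f, (stateAt σ0 tr i).heap c' f ≠ some c))
    (hUniq : ∀ (i j : ℕ) (x x' : V) (o o' : O) (c : CO),
      tr[i]? = some (Ev.alloc x o c) → tr[j]? = some (Ev.alloc x' o' c) → i = j)
    (hAllAlloc : ∀ i v c, (stateAt σ0 tr i).env v = some c →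
      ∃ x'' o'', Ev.alloc x'' o'' c ∈ tr)
    (i : ℕ) (x : V) (c : CO) (x' : V) (o : O)
    (hdyn : (stateAt σ0 tr i).env x = some c)
    (halloc : Ev.alloc x' o c ∈ tr) :
    Derives tr x o := by

  suffices H : ∀ i,
      (∀ x c, (stateAt σ0 tr i).env x = some c →
        ∀ x' o, Ev.alloc x' o c ∈ tr → Derives tr x o) ∧
      (∀ c' f c, (stateAt σ0 tr i).heap c' f = some c →
        ∃ z w, Ev.store z f w ∈ tr ∧
          (∀ x'' o'', Ev.alloc x'' o'' c' ∈ tr → Derives tr z o'') ∧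
          (∀ x'' o'', Ev.alloc x'' o'' c ∈ tr → Derives tr w o'')) by
    exact (H i).1 x c hdyn x' o halloc
  have hone : ∀ x'' o'' (c : CO) (j : ℕ), tr[j]? = some (Ev.alloc x'' o'' c) →
      ∀ x3 o3, Ev.alloc x3 o3 c ∈ tr → x3 = x'' ∧ o3 = o'' := by
    intro x'' o'' c j hj x3 o3 hm
    obtain ⟨k, hk⟩ := List.mem_iff_getElem?.1 hm
    have := hUniq j k x'' x3 o'' o3 c hj hk
    subst this
    rw [hj] at hk
    cases hk
    exact ⟨rfl, rfl⟩
  intro i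
  induction i with
  | zero =>
    constructor
    · intro x c h
      simp [stateAt, runs, hEnv] at h
    · intro c' f c h
      simp [stateAt, runs, hHeap] at h
  | succ i ih =>
    have hsplit : stateAt σ0 tr (i+1) =
        match tr[i]? with
        | some e => step (stateAt σ0 tr i) e
        | none => stateAt σ0 tr i := by
      rw [stateAt, List.take_succ]
      cases h : tr[i]? with
      | none => simp [runs, stateAt]
      | some e => simp [runs, stateAt, List.foldl_append]
    cases hte : tr[i]? with
    | none => rw [hsplit, hte]; exact ih
    | some e =>
      rw [hsplit, hte]
      have hmem : e ∈ tr := List.mem_iff_getElem?.2 ⟨i, hte⟩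
      cases e with
      | alloc xa oa ca =>
        refine ⟨?_, ?_⟩
        · intro v cv hv x3 o3 h3
          simp only [step] at hv
          rcases eq_or_ne v xa with rfl | hne
          · rw [Function.update_self] at hv
            cases hv
            obtain ⟨rfl, rfl⟩ := hone _ _ _ i hte x3 o3 h3
            exact Derives.alloc hmem
          · rw [Function.update_of_ne hne] at hv
            exact ih.1 v cv hv x3 o3 h3
        · intro c' f cv hv
          exact ih.2 c' f cv hv
      | assign xa ya =>
        refine ⟨?_, ?_⟩
        · intro v cv hv x3 o3 h3
          simp only [step] at hv
          rcases eq_or_ne v xa with rfl | hne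
          · rw [Function.update_self] at hv
            exact Derives.assign hmem (ih.1 ya cv hv x3 o3 h3)
          · rw [Function.update_of_ne hne] at hv
            exact ih.1 v cv hv x3 o3 h3
        · intro c' f cv hv
          exact ih.2 c' f cv hv
      | load xa ya fa =>
        refine ⟨?_, ?_⟩
        · intro v cv hv x3 o3 h3
          simp only [step] at hv
          rcases eq_or_ne v xa with rfl | hne
          · rw [Function.update_self] at hv
            cases hy : (stateAt σ0 tr i).env ya with
            | none => rw [hy] at hv; simp at hv
            | some cb =>
              rw [hy] at hv
              simp only [Option.bind_eq_bind, Option.bind_some] at hv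
              obtain ⟨z, w, hst, hz, hw⟩ := ih.2 cb fa cv hv
              obtain ⟨xb, ob, hb⟩ := hAllAlloc i ya cb hy
              exact Derives.loadstore hmem hst (ih.1 ya cb hy xb ob hb)
                (hz xb ob hb) (hw x3 o3 h3)
          · rw [Function.update_of_ne hne] at hv
            exact ih.1 v cv hv x3 o3 h3
        · intro c' f cv hv
          exact ih.2 c' f cv hv
      | store xa fa ya =>
        refine ⟨?_, ?_⟩
        · intro v cv hv x3 o3 h3
          exact ih.1 v cv hv x3 o3 h3
        · intro c' f cv hv
          simp only [step] at hv
          by_cases hc : (stateAt σ0 tr i).env xa = some c' ∧ f = fa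
          · rw [if_pos hc] at hv
            obtain ⟨hx, rfl⟩ := hc
            refine ⟨xa, ya, hmem, ?_, ?_⟩
            · intro x3 o3 h3
              exact ih.1 xa c' hx x3 o3 h3
            · intro x3 o3 h3
              exact ih.1 ya cv hv x3 o3 h3
          · rw [if_neg hc] at hv
            exact ih.2 c' f cv hv
      | call xa ma ya ca =>
        refine ⟨?_, ?_⟩
        · intro v cv hv x3 o3 h3
          simp only [step] at hv
          rcases eq_or_ne v xa with rfl | hne
          · rw [Function.update_self] at hv
            cases hv
            exact Derives.report hmem h3
          · rw [Function.update_of_ne hne] at hv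
            exact ih.1 v cv hv x3 o3 h3
        · intro c' f cv hv
          exact ih.2 c' f cv hv
end

section
/- In the abstract operational model where library calls are the only statements that can introduce an edge not derivable statically, the first missing dynamic edge x↪ō (ō allocated in available code) occurring in an execution must be assigned to x by a library call statement x←m(y); it cannot be introduced by an allocation, assignment, load, or store. -/
/-- Optimistic static derivation (no reports): the allocation, assignment and
load/store rules over the statements occurring in the trace; library calls are
treated as no-ops. -/
inductive SDerives {V F M O CO : Type} (tr : List (Ev V F M O CO)) : V → O → Prop where
  | alloc {x o c} : Ev.alloc x o c ∈ tr → SDerives tr x o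
  | assign {x y o} : Ev.assign x y ∈ tr → SDerives tr y o → SDerives tr x o
  | loadstore {x y z w : V} {f : F} {o o' : O} :
      Ev.load x y f ∈ tr → Ev.store z f w ∈ tr →
      SDerives tr y o' → SDerives tr z o' → SDerives tr w o → SDerives tr x o

theorem stateAt_succ' {V F M O CO : Type} [DecidableEq V] [DecidableEq F] [DecidableEq CO]
    (σ0 : St V F CO) (tr : List (Ev V F M O CO)) (i : ℕ) (e : Ev V F M O CO)
    (h : tr[i]? = some e) :
    stateAt σ0 tr (i+1) = step (stateAt σ0 tr i) e := by
  simp [stateAt, runs, List.take_succ, h]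

/-- The first missing dynamic edge `x ↪ c` (with `c` allocated in
available code at site `o`) occurring in an execution must be assigned to `x` by a
library call statement: if the edge is missing (not statically derivable) at state
`i+1` but no missing edge exists at any state `j ≤ i`, then the `i`-th statement
is a library call assigning `c` to `x`; it cannot be an allocation, assignment,
load, or store. -/
theorem stmt8 {V F M O CO : Type} [DecidableEq V] [DecidableEq F] [DecidableEq CO]
    (σ0 : St V F CO)
    (hEnv : ∀ v, σ0.env v = none) (hHeap : ∀ c f, σ0.heap c f = none)
    (tr : List (Ev V F M O CO))
    (hFresh : ∀ i x o c, tr[i]? = some (.alloc x o c) →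
      (∀ v, (stateAt σ0 tr i).env v ≠ some c) ∧
      (∀ c' f, (stateAt σ0 tr i).heap c' f ≠ some c))
    (hUniq : ∀ (i j : ℕ) (x x' : V) (o o' : O) (c : CO),
      tr[i]? = some (Ev.alloc x o c) → tr[j]? = some (Ev.alloc x' o' c) → i = j)
    (hAllAlloc : ∀ i v c, (stateAt σ0 tr i).env v = some c →
      ∃ x'' o'', Ev.alloc x'' o'' c ∈ tr)
    (i : ℕ) (x : V) (c : CO) (x' : V) (o : O)
    (hlen : i < tr.length)
    (hdyn : (stateAt σ0 tr (i + 1)).env x = some c)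
    (halloc : Ev.alloc x' o c ∈ tr)
    (hmiss : ¬ SDerives tr x o)
    (hfirst : ∀ j ≤ i, ∀ (x1 : V) (c1 : CO) (x1' : V) (o1 : O),
      (stateAt σ0 tr j).env x1 = some c1 → Ev.alloc x1' o1 c1 ∈ tr →
      SDerives tr x1 o1) :
    ∃ m y, tr[i]? = some (Ev.call x m y c) := by
  -- uniqueness of allocation events per concrete object
  have allocEq : ∀ (x1 x2 : V) (o1 o2 : O) (c0 : CO),
      Ev.alloc x1 o1 c0 ∈ tr → Ev.alloc x2 o2 c0 ∈ tr → x1 = x2 ∧ o1 = o2 := by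
    intro x1 x2 o1 o2 c0 h1 h2
    obtain ⟨n1, hn1, e1⟩ := List.getElem_of_mem h1
    obtain ⟨n2, hn2, e2⟩ := List.getElem_of_mem h2
    have g1 : tr[n1]? = some (Ev.alloc x1 o1 c0) := by
      rw [List.getElem?_eq_getElem hn1, e1]
    have g2 : tr[n2]? = some (Ev.alloc x2 o2 c0) := by
      rw [List.getElem?_eq_getElem hn2, e2]
    have hn : n1 = n2 := hUniq n1 n2 _ _ _ _ _ g1 g2
    subst hn
    rw [g1] at g2
    injection g2 with h
    injection h with h1' h2' h3'
    exact ⟨h1', h2'⟩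
  -- heap invariant
  have hP : ∀ j, j ≤ i → ∀ c' f c0, (stateAt σ0 tr j).heap c' f = some c0 →
      ∀ x1 o1 x2 o2, Ev.alloc x1 o1 c' ∈ tr → Ev.alloc x2 o2 c0 ∈ tr →
      ∃ z w, Ev.store z f w ∈ tr ∧ SDerives tr z o1 ∧ SDerives tr w o2 := by
    intro j
    induction j with
    | zero =>
      intro _ c' f c0 h
      simp [stateAt, runs, hHeap] at h
    | succ j ih =>
      intro hj c' f c0 hheap x1 o1 x2 o2 ha1 ha2
      have hj' : j ≤ i := Nat.le_of_succ_le hj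
      have hjlen : j < tr.length := lt_of_lt_of_le (Nat.lt_of_succ_le hj) (le_of_lt hlen)
      obtain ⟨e, he⟩ : ∃ e, tr[j]? = some e := ⟨tr[j], List.getElem?_eq_getElem hjlen⟩
      rw [stateAt_succ' σ0 tr j e he] at hheap
      have hmem := List.mem_of_getElem? he
      cases e with
      | store z f' w =>
        simp only [step] at hheap
        by_cases hc : (stateAt σ0 tr j).env z = some c' ∧ f = f'
        · rw [if_pos hc] at hheap
          refine ⟨z, w, ?_, ?_, ?_⟩
          · rw [hc.2]; exact hmem
          · exact hfirst j hj' z c' x1 o1 hc.1 ha1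
          · exact hfirst j hj' w c0 x2 o2 hheap ha2
        · rw [if_neg hc] at hheap
          exact ih hj' c' f c0 hheap x1 o1 x2 o2 ha1 ha2
      | alloc a b d => exact ih hj' c' f c0 hheap x1 o1 x2 o2 ha1 ha2
      | assign a b => exact ih hj' c' f c0 hheap x1 o1 x2 o2 ha1 ha2
      | load a b f'' => exact ih hj' c' f c0 hheap x1 o1 x2 o2 ha1 ha2
      | call a m' b d => exact ih hj' c' f c0 hheap x1 o1 x2 o2 ha1 ha2
  obtain ⟨e, he⟩ : ∃ e, tr[i]? = some e := ⟨tr[i], List.getElem?_eq_getElem hlen⟩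
  have hmem := List.mem_of_getElem? he
  rw [stateAt_succ' σ0 tr i e he] at hdyn
  cases e with
  | alloc x2 o2 c2 =>
    simp only [step] at hdyn
    by_cases hx : x = x2
    · subst hx
      rw [Function.update_self] at hdyn
      injection hdyn with hc2
      subst hc2
      obtain ⟨_, ho⟩ := allocEq x' x o o2 _ halloc hmem
      subst ho
      exact absurd (SDerives.alloc hmem) hmiss
    · rw [Function.update_of_ne hx] at hdyn
      exact absurd (hfirst i le_rfl x c x' o hdyn halloc) hmiss
  | assign x2 y =>
    simp only [step] at hdyn
    by_cases hx : x = x2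
    · subst hx
      rw [Function.update_self] at hdyn
      have hy := hfirst i le_rfl y c x' o hdyn halloc
      exact absurd (SDerives.assign hmem hy) hmiss
    · rw [Function.update_of_ne hx] at hdyn
      exact absurd (hfirst i le_rfl x c x' o hdyn halloc) hmiss
  | load x2 y f =>
    simp only [step] at hdyn
    by_cases hx : x = x2
    · subst hx
      rw [Function.update_self] at hdyn
      obtain ⟨cy, hcy, hheap⟩ := Option.bind_eq_some_iff.mp hdyn
      obtain ⟨x'', o'', ha''⟩ := hAllAlloc i y cy hcy
      have hy := hfirst i le_rfl y cy x'' o'' hcy ha''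
      obtain ⟨z, w, hst, hz, hw⟩ := hP i le_rfl cy f c hheap x'' o'' x' o ha'' halloc
      exact absurd (SDerives.loadstore hmem hst hy hz hw) hmiss
    · rw [Function.update_of_ne hx] at hdyn
      exact absurd (hfirst i le_rfl x c x' o hdyn halloc) hmiss
  | store z f w =>
    simp only [step] at hdyn
    exact absurd (hfirst i le_rfl x c x' o hdyn halloc) hmiss
  | call x2 m y c2 =>
    simp only [step] at hdyn
    by_cases hx : x = x2
    · subst hx
      rw [Function.update_self] at hdyn
      injection hdyn with hc2
      subst hc2
      exact ⟨m, y, he⟩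
    · rw [Function.update_of_ne hx] at hdyn
      exact absurd (hfirst i le_rfl x c x' o hdyn halloc) hmiss
end
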